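/- For every real s, the function h_s(p) = s·(s + 2p·(1−s))·log((1−p)/p) − log( (1−p) + p·((1−p)/p)^{2s} ) is convex on the open interval (0,1). -/

import Mathlib

open Real Set

noncomputable def hsD1 (s : ℝ) : ℝ → ℝ := fun x =>
  s*(2*(1-s)) * Real.log ((1-x)/x)
  + s*(s+2*x*(1-s)) * ((-1)/(x*(1-x)))
  - ((-1) + (((1-x)/x)^(2*s) + x * (-(2*s*((1-x)/x)^(2*s-1)/x^2))))
      / ((1-x) + x*((1-x)/x)^(2*s))

noncomputable def hsD2 (s : ℝ) : ℝ → ℝ := fun x =>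
  (((1 - ((1-x)/x)^(2*s-1))*s + ((1-x)/x)^(2*s-1) - x*(1+((1-x)/x)^(2*s-1)))^2)
    / (x*(1-x)*(1+((1-x)/x)^(2*s-1)))^2

theorem hs_deriv1 (s : ℝ) {p : ℝ} (hp : p ∈ Set.Ioo (0:ℝ) 1) :
    HasDerivAt (fun p : ℝ => s * (s + 2*p*(1 - s)) * Real.log ((1 - p) / p)
        - Real.log ((1 - p) + p * ((1 - p) / p) ^ (2*s))) (hsD1 s p) p := by
  obtain ⟨hp0, hp1⟩ := hp
  have hq : (0:ℝ) < 1 - p := by linarith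
  have hr : (0:ℝ) < (1 - p)/p := div_pos hq hp0
  have hrd : HasDerivAt (fun x : ℝ => (1 - x)/x) ((-1)/p^2) p := by
    have h := ((hasDerivAt_id p).const_sub 1).div (hasDerivAt_id p) hp0.ne'
    refine h.congr_deriv ?_
    dsimp only [id, Pi.mul_apply]
    field_simp
    ring
  have hlog : HasDerivAt (fun x : ℝ => Real.log ((1 - x)/x)) ((-1)/(p*(1-p))) p := by
    have h := hrd.log hr.ne'
    convert h using 1
    rw [div_eq_div_iff (by positivity) (by positivity)]
    field_simp
  have hR : HasDerivAt (fun x : ℝ => ((1 - x)/x)^(2*s))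
      (-(2*s*((1-p)/p)^(2*s-1)/p^2)) p := by
    have h := hrd.rpow_const (p := 2*s) (Or.inl hr.ne')
    convert h using 1
    ring
  have hc : HasDerivAt (fun x : ℝ => s*(s+2*x*(1-s))) (s*(2*(1-s))) p := by
    have h := ((((hasDerivAt_id p).const_mul 2).mul_const (1-s)).const_add s).const_mul s
    refine h.congr_deriv ?_
    ring
  have hApos : (0:ℝ) < (1 - p) + p * ((1 - p) / p) ^ (2*s) :=
    add_pos hq (mul_pos hp0 (Real.rpow_pos_of_pos hr _))
  have hA : HasDerivAt (fun x : ℝ => (1 - x) + x * ((1 - x)/x)^(2*s))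
      ((-1) + (((1-p)/p)^(2*s) + p * (-(2*s*((1-p)/p)^(2*s-1)/p^2)))) p := by
    have h := ((hasDerivAt_id p).const_sub 1).add ((hasDerivAt_id p).mul hR)
    refine h.congr_deriv ?_
    simp only [id_eq]
    ring
  have hlogA : HasDerivAt (fun x : ℝ => Real.log ((1 - x) + x * ((1 - x)/x)^(2*s)))
      (((-1) + (((1-p)/p)^(2*s) + p * (-(2*s*((1-p)/p)^(2*s-1)/p^2))))
        / ((1 - p) + p * ((1 - p)/p)^(2*s))) p := hA.log hApos.ne'
  exact (hc.mul hlog).sub hlogA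

theorem hs_deriv2 (s : ℝ) {p : ℝ} (hp : p ∈ Set.Ioo (0:ℝ) 1) :
    HasDerivAt (hsD1 s) (hsD2 s p) p := by
  obtain ⟨hp0, hp1⟩ := hp
  have hq : (0:ℝ) < 1 - p := by linarith
  have hr : (0:ℝ) < (1 - p)/p := div_pos hq hp0
  have hrd : HasDerivAt (fun x : ℝ => (1 - x)/x) ((-1)/p^2) p := by
    have h := ((hasDerivAt_id p).const_sub 1).div (hasDerivAt_id p) hp0.ne'
    refine h.congr_deriv ?_
    dsimp only [id, Pi.mul_apply]
    field_simp
    ring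
  have hlog : HasDerivAt (fun x : ℝ => Real.log ((1 - x)/x)) ((-1)/(p*(1-p))) p := by
    have h := hrd.log hr.ne'
    convert h using 1
    rw [div_eq_div_iff (by positivity) (by positivity)]
    field_simp
  have hW : HasDerivAt (fun x : ℝ => ((1 - x)/x)^(2*s-1))
      (-((2*s-1) * ((1-p)/p)^(2*s-1) / (p*(1-p)))) p := by
    have h := hrd.rpow_const (p := 2*s-1) (Or.inl hr.ne')
    have hsub : ((1-p)/p)^(2*s-1-1) = ((1-p)/p)^(2*s-1) / ((1-p)/p) := by
      rw [Real.rpow_sub hr, Real.rpow_one]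
    convert h using 1
    rw [hsub]
    field_simp
  have hR : HasDerivAt (fun x : ℝ => ((1 - x)/x)^(2*s))
      (-(2*s*((1-p)/p)^(2*s-1)/p^2)) p := by
    have h := hrd.rpow_const (p := 2*s) (Or.inl hr.ne')
    convert h using 1
    ring
  have hc : HasDerivAt (fun x : ℝ => s*(s+2*x*(1-s))) (s*(2*(1-s))) p := by
    have h := ((((hasDerivAt_id p).const_mul 2).mul_const (1-s)).const_add s).const_mul s
    refine h.congr_deriv ?_
    ring
  have hApos : (0:ℝ) < (1 - p) + p * ((1 - p) / p) ^ (2*s) :=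
    add_pos hq (mul_pos hp0 (Real.rpow_pos_of_pos hr _))
  have hA : HasDerivAt (fun x : ℝ => (1 - x) + x * ((1 - x)/x)^(2*s))
      ((-1) + (((1-p)/p)^(2*s) + p * (-(2*s*((1-p)/p)^(2*s-1)/p^2)))) p := by
    have h := ((hasDerivAt_id p).const_sub 1).add ((hasDerivAt_id p).mul hR)
    refine h.congr_deriv ?_
    simp only [id_eq]
    ring
  -- first summand
  have hu1 := hlog.const_mul (s*(2*(1-s)))
  -- second summand
  have hv : HasDerivAt (fun x : ℝ => (-1)/(x*(1-x))) ((1-2*p)/(p*(1-p))^2) p := by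
    have h := (hasDerivAt_const p (-1:ℝ)).div
      ((hasDerivAt_id p).mul ((hasDerivAt_id p).const_sub 1)) (mul_pos hp0 hq).ne'
    refine h.congr_deriv ?_
    dsimp only [id, Pi.mul_apply]
    field_simp
    ring
  have hu2 := hc.mul hv
  -- third summand: N / A
  have hT := (((hW.const_mul (2*s)).div (hasDerivAt_pow 2 p) (pow_ne_zero 2 hp0.ne')).neg)
  have hN := ((hR.add ((hasDerivAt_id p).mul hT)).const_add (-1))
  have hu3 := hN.div hA hApos.ne'
  have htot := (hu1.add hu2).sub hu3
  have key : HasDerivAt (hsD1 s) (hsD2 s p) p := by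
    unfold hsD1 hsD2
    refine htot.congr_deriv ?_
    dsimp only [id, Pi.mul_apply, Pi.add_apply, Pi.sub_apply, Pi.neg_apply, Pi.div_apply]
    have hadd : ((1-p)/p)^(2*s) = ((1-p)/p)^(2*s-1) * ((1-p)/p) := by
      rw [← Real.rpow_add_one hr.ne' (2*s-1)]
      norm_num
    rw [hadd]
    have hAfac : (1-p) + p * (((1-p)/p)^(2*s-1) * ((1-p)/p))
        = (1-p)*(1+((1-p)/p)^(2*s-1)) := by
      field_simp
    rw [hAfac]
    set W := ((1-p)/p)^(2*s-1) with hWdef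
    have hW0 : (0:ℝ) < W := Real.rpow_pos_of_pos hr _
    have h1W : (0:ℝ) < 1 + W := by linarith
    push_cast
    field_simp
    ring
  exact key

/-- For every real `s`, the function
`h_s(p) = s(s + 2p(1-s)) log((1-p)/p) - log((1-p) + p((1-p)/p)^{2s})`
is convex on `(0,1)`. -/
theorem h_s_convex (s : ℝ) :
    ConvexOn ℝ (Set.Ioo (0:ℝ) 1)
      (fun p : ℝ => s * (s + 2*p*(1 - s)) * Real.log ((1 - p) / p)
        - Real.log ((1 - p) + p * ((1 - p) / p) ^ (2*s))) := by
  apply convexOn_of_hasDerivWithinAt2_nonneg (convex_Ioo 0 1)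
    (f' := hsD1 s) (f'' := hsD2 s)
  · intro x hx
    exact (hs_deriv1 s hx).continuousAt.continuousWithinAt
  · intro x hx
    rw [interior_Ioo] at hx
    exact ((hs_deriv1 s hx).hasDerivWithinAt)
  · intro x hx
    rw [interior_Ioo] at hx
    exact ((hs_deriv2 s hx).hasDerivWithinAt)
  · intro x hx
    unfold hsD2
    positivity
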